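/- For integers n > d ≥ 0, the sum of trinomial coefficients ∑_{k=0}^{n-1} T(k,d) equals ∑_{1≤k≤n, k+d odd} C(n,k)·C(k-1, (k+d-1)/2), where T(k,d) denotes the trinomial coefficient, i.e., the coefficient of x^{k+d} in (1+x+x^2)^k. -/

import Mathlib

open Polynomial Finset

/-- The trinomial coefficient `T n m`: the coefficient of `x^(n+m)` in `(1+x+x^2)^n`. -/
noncomputable def trinomial (n m : ℕ) : ℤ :=
  Polynomial.coeff ((1 + Polynomial.X + Polynomial.X ^ 2 : Polynomial ℤ) ^ n) (n + m)

private lemma coeff_Q_pow (m t : ℕ) :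
    ((1 + X ^ 2 : ℤ[X]) ^ m).coeff t
      = if t % 2 = 0 then (Nat.choose m (t / 2) : ℤ) else 0 := by
  rw [add_comm (1 : ℤ[X]), add_pow]
  simp only [one_pow, mul_one, ← pow_mul, finset_sum_coeff]
  have hterm : ∀ k ∈ range (m + 1),
      ((X : ℤ[X]) ^ (2 * k) * (m.choose k : ℤ[X])).coeff t
        = if t = 2 * k then (m.choose k : ℤ) else 0 := by
    intro k _
    rw [← Polynomial.C_eq_natCast, mul_comm, coeff_C_mul, coeff_X_pow]
    by_cases h : t = 2 * k <;> simp [h, eq_comm]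
  rw [Finset.sum_congr rfl hterm]
  by_cases hpar : t % 2 = 0
  · simp only [hpar, if_true]
    have ht : ∀ k, t = 2 * k ↔ k = t / 2 := by intro k; omega
    simp only [ht]
    rw [Finset.sum_ite_eq' (range (m + 1)) (t / 2) (fun k => (m.choose k : ℤ))]
    by_cases hm : t / 2 ∈ range (m + 1)
    · simp [hm]
    · simp only [hm, if_false]
      rw [Finset.mem_range] at hm
      rw [Nat.choose_eq_zero_of_lt (by omega)]
      simp
  · simp only [hpar, if_false]
    apply Finset.sum_eq_zero
    intro k _
    have : t ≠ 2 * k := by omega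
    simp [this]

private lemma geomA (n : ℕ) :
    (1 + X ^ 2 : ℤ[X]) * ∑ k ∈ range n, X ^ (n - k) * (1 + X + X ^ 2) ^ k
      = X * (1 + X + X ^ 2) ^ n - X ^ (n + 1) := by
  induction n with
  | zero => simp
  | succ n ih =>
    rw [Finset.sum_range_succ]
    have hre : ∀ k ∈ range n,
        (X : ℤ[X]) ^ (n + 1 - k) * (1 + X + X ^ 2) ^ k
          = X * (X ^ (n - k) * (1 + X + X ^ 2) ^ k) := by
      intro k hk
      rw [Finset.mem_range] at hk
      have : n + 1 - k = (n - k) + 1 := by omega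
      rw [this, pow_succ]
      ring
    rw [Finset.sum_congr rfl hre, ← Finset.mul_sum, show n + 1 - n = 1 by omega, pow_one]
    have : (1 + X ^ 2 : ℤ[X]) * (X * ∑ k ∈ range n, X ^ (n - k) * (1 + X + X ^ 2) ^ k
        + X * (1 + X + X ^ 2) ^ n)
        = X * ((1 + X ^ 2) * ∑ k ∈ range n, X ^ (n - k) * (1 + X + X ^ 2) ^ k)
          + X * (1 + X ^ 2) * (1 + X + X ^ 2) ^ n := by ring
    rw [this, ih]
    ring

private lemma geomB (n : ℕ) (hn : 1 ≤ n) :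
    (1 + X ^ 2 : ℤ[X]) * ∑ k ∈ Icc 1 n,
        (n.choose k : ℤ[X]) * (X ^ (n - k) * (1 + X ^ 2) ^ (k - 1))
      = (1 + X + X ^ 2) ^ n - X ^ n := by
  have hre : ∀ k ∈ Icc 1 n,
      (1 + X ^ 2 : ℤ[X]) * ((n.choose k : ℤ[X]) * (X ^ (n - k) * (1 + X ^ 2) ^ (k - 1)))
        = (1 + X ^ 2) ^ k * X ^ (n - k) * (n.choose k : ℤ[X]) := by
    intro k hk
    rw [Finset.mem_Icc] at hk
    have : (1 + X ^ 2 : ℤ[X]) * (1 + X ^ 2) ^ (k - 1) = (1 + X ^ 2) ^ k := by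
      rw [← pow_succ']
      congr 1
      omega
    rw [show (1 + X ^ 2 : ℤ[X]) * ((n.choose k : ℤ[X]) * (X ^ (n - k) * (1 + X ^ 2) ^ (k - 1)))
        = (n.choose k : ℤ[X]) * (X ^ (n - k) * ((1 + X ^ 2) * (1 + X ^ 2) ^ (k - 1))) from by ring,
      this]
    ring
  rw [Finset.mul_sum, Finset.sum_congr rfl hre]
  have hP : (1 + X + X ^ 2 : ℤ[X]) ^ n = ((1 + X ^ 2) + X) ^ n := by ring_nf
  rw [hP, add_pow]
  have hicc : Finset.Icc 1 n = (Finset.range (n + 1)).erase 0 := by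
    ext k; simp [Finset.mem_Icc, Finset.mem_range, Finset.mem_erase]; omega
  rw [hicc]
  rw [← Finset.add_sum_erase (range (n + 1)) _ (Finset.mem_range.mpr (Nat.succ_pos n))]
  simp

theorem stmt0 (n d : ℕ) (hdn : d < n) :
    ∑ k ∈ Finset.range n, trinomial k d =
      ∑ k ∈ Finset.Icc 1 n,
        if (k + d) % 2 = 1 then
          (Nat.choose n k : ℤ) * Nat.choose (k - 1) ((k + d - 1) / 2)
        else 0 := by
  have hn : 1 ≤ n := by omega
  have hQ : (1 + X ^ 2 : ℤ[X]) ≠ 0 := by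
    intro h
    have := congrArg (fun p => p.coeff 0) h
    simp at this
  have key : (∑ k ∈ range n, (X : ℤ[X]) ^ (n - k) * (1 + X + X ^ 2) ^ k)
      = X * ∑ k ∈ Icc 1 n, (n.choose k : ℤ[X]) * (X ^ (n - k) * (1 + X ^ 2) ^ (k - 1)) := by
    apply mul_left_cancel₀ hQ
    rw [geomA n, mul_left_comm, geomB n hn]
    ring
  have hcoeff := congrArg (fun p => p.coeff (n + d)) key
  simp only [finset_sum_coeff] at hcoeff
  -- LHS
  have hL : ∀ k ∈ range n,
      ((X : ℤ[X]) ^ (n - k) * (1 + X + X ^ 2) ^ k).coeff (n + d) = trinomial k d := by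
    intro k hk
    rw [Finset.mem_range] at hk
    have h1 : n + d = (k + d) + (n - k) := by omega
    rw [h1, Polynomial.coeff_X_pow_mul]
    rfl
  -- RHS
  have hR : (X * ∑ k ∈ Icc 1 n,
      (n.choose k : ℤ[X]) * (X ^ (n - k) * (1 + X ^ 2) ^ (k - 1))).coeff (n + d)
      = ∑ k ∈ Icc 1 n,
        if (k + d) % 2 = 1 then
          (Nat.choose n k : ℤ) * Nat.choose (k - 1) ((k + d - 1) / 2)
        else 0 := by
    have h1 : n + d = (n + d - 1) + 1 := by omega
    rw [h1, Polynomial.coeff_X_mul, finset_sum_coeff]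
    apply Finset.sum_congr rfl
    intro k hk
    rw [Finset.mem_Icc] at hk
    rw [← Polynomial.C_eq_natCast, coeff_C_mul]
    have h2 : n + d - 1 = (k + d - 1) + (n - k) := by omega
    rw [h2, Polynomial.coeff_X_pow_mul, coeff_Q_pow]
    by_cases hpar : (k + d) % 2 = 1
    · have : (k + d - 1) % 2 = 0 := by omega
      simp [hpar, this]
    · have : (k + d - 1) % 2 ≠ 0 := by omega
      simp [hpar, this]
  rw [Finset.sum_congr rfl hL] at hcoeff
  rw [hcoeff, hR]
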